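/- Let x0, x1 ∈ ℝ with x0 ≠ x1, let σ > 0 and set Δ = |x0 − x1|. Then for every ε ≥ 0, the hockey-stick divergence between the Gaussians N(x0, σ²) and N(x1, σ²) at threshold e^ε is given exactly by H_{e^ε}(N(x0, σ²)‖N(x1, σ²)) = Φ(−εσ/Δ + Δ/(2σ)) − e^ε · Φ(−εσ/Δ − Δ/(2σ)). -/

import Mathlib

open MeasureTheory ProbabilityTheory Real Set

/-- Hockey-stick divergence `H_α(P‖Q) = sup_E (P(E) − α·Q(E))`. -/
noncomputable def hockeyStick {Ω : Type*} [MeasurableSpace Ω] (α : ℝ) (P Q : Measure Ω) : ℝ :=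
  ⨆ E : {E : Set Ω // MeasurableSet E}, ((P E).toReal - α * (Q E).toReal)

lemma gauss_affine (x0 s : ℝ) :
    Measure.map (fun x => s * x + x0) (gaussianReal 0 1)
      = gaussianReal x0 ⟨s ^ 2, sq_nonneg s⟩ := by
  have : (fun x : ℝ => s * x + x0) = (· + x0) ∘ (s * ·) := rfl
  rw [this, ← Measure.map_map (measurable_add_const _) (measurable_const_mul _),
    gaussianReal_map_const_mul, gaussianReal_map_add_const]
  norm_num
  rfl

lemma gauss_Iic (x0 σ : ℝ) (hσ : 0 < σ) (c : ℝ) :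
    ((gaussianReal x0 ⟨σ ^ 2, sq_nonneg σ⟩) (Iic c)).toReal
      = cdf (gaussianReal 0 1) ((c - x0) / σ) := by
  rw [cdf_eq_real, measureReal_def, ← gauss_affine x0 σ,
    Measure.map_apply (by fun_prop) measurableSet_Iic]
  congr 2
  ext x
  simp only [Set.mem_preimage, Set.mem_Iic]
  rw [le_div_iff₀ hσ]
  constructor <;> intro h <;> nlinarith

lemma gauss_Ici (x0 σ : ℝ) (hσ : 0 < σ) (c : ℝ) :
    ((gaussianReal x0 ⟨σ ^ 2, sq_nonneg σ⟩) (Ici c)).toReal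
      = cdf (gaussianReal 0 1) ((x0 - c) / σ) := by
  have hv : (⟨σ ^ 2, sq_nonneg σ⟩ : NNReal) = ⟨(-σ) ^ 2, sq_nonneg (-σ)⟩ := by
    ext; simp
  rw [cdf_eq_real, measureReal_def, hv, ← gauss_affine x0 (-σ),
    Measure.map_apply (by fun_prop) measurableSet_Ici]
  congr 2
  ext x
  simp only [Set.mem_preimage, Set.mem_Ici, Set.mem_Iic]
  rw [le_div_iff₀ hσ]
  constructor <;> intro h <;> nlinarith

lemma gauss_meas_le (x0 x1 σ α : ℝ) (hσ : 0 < σ) (hα : 0 ≤ α) {A : Set ℝ}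
    (h : ∀ t ∈ A, α * gaussianPDFReal x1 ⟨σ ^ 2, sq_nonneg σ⟩ t
        ≤ gaussianPDFReal x0 ⟨σ ^ 2, sq_nonneg σ⟩ t) :
    ENNReal.ofReal α * gaussianReal x1 ⟨σ ^ 2, sq_nonneg σ⟩ A
      ≤ gaussianReal x0 ⟨σ ^ 2, sq_nonneg σ⟩ A := by
  have hv : (⟨σ ^ 2, sq_nonneg σ⟩ : NNReal) ≠ 0 := by
    simp [← NNReal.coe_ne_zero]; positivity
  rw [gaussianReal_apply _ hv, gaussianReal_apply _ hv]
  obtain ⟨v, hv', hvc⟩ : ∃ v : NNReal, v = ⟨σ ^ 2, sq_nonneg σ⟩ ∧ (v : ℝ) = σ ^ 2 :=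
    ⟨_, rfl, rfl⟩
  rw [← hv'] at h ⊢
  rw [← MeasureTheory.lintegral_const_mul _
    (measurable_gaussianPDF _ _)]
  refine setLIntegral_mono (measurable_gaussianPDF _ _) fun t ht => ?_
  rw [gaussianPDF, gaussianPDF, ← ENNReal.ofReal_mul hα]
  exact ENNReal.ofReal_le_ofReal (h t ht)

lemma gauss_real_le (x0 x1 σ α : ℝ) (hσ : 0 < σ) (hα : 0 ≤ α) {A : Set ℝ}
    (h : ∀ t ∈ A, α * gaussianPDFReal x1 ⟨σ ^ 2, sq_nonneg σ⟩ t
        ≤ gaussianPDFReal x0 ⟨σ ^ 2, sq_nonneg σ⟩ t) :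
    α * ((gaussianReal x1 ⟨σ ^ 2, sq_nonneg σ⟩) A).toReal
      ≤ ((gaussianReal x0 ⟨σ ^ 2, sq_nonneg σ⟩) A).toReal := by
  have hm := gauss_meas_le x0 x1 σ α hσ hα h
  obtain ⟨v, hv', hvc⟩ : ∃ v : NNReal, v = ⟨σ ^ 2, sq_nonneg σ⟩ ∧ (v : ℝ) = σ ^ 2 :=
    ⟨_, rfl, rfl⟩
  rw [← hv'] at hm ⊢
  have h' := ENNReal.toReal_mono (measure_ne_top _ _) hm
  rwa [ENNReal.toReal_mul, ENNReal.toReal_ofReal hα] at h'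

lemma pdf_compare (x0 x1 σ ε t : ℝ) (hσ : 0 < σ)
    (h : 2 * σ ^ 2 * ε ≤ (x0 - x1) * (2 * t - x0 - x1)) :
    exp ε * gaussianPDFReal x1 ⟨σ ^ 2, sq_nonneg σ⟩ t
      ≤ gaussianPDFReal x0 ⟨σ ^ 2, sq_nonneg σ⟩ t := by
  obtain ⟨v, hv', hvc⟩ : ∃ v : NNReal, v = ⟨σ ^ 2, sq_nonneg σ⟩ ∧ (v : ℝ) = σ ^ 2 :=
    ⟨_, rfl, rfl⟩
  rw [← hv']
  simp only [gaussianPDFReal, hvc]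
  have hc : (0:ℝ) < (√(2 * π * σ ^ 2))⁻¹ := by positivity
  rw [mul_left_comm, mul_le_mul_iff_of_pos_left hc, ← Real.exp_add, Real.exp_le_exp, ← sub_nonneg]
  have heq : -(t - x0) ^ 2 / (2 * σ ^ 2) - (ε + -(t - x1) ^ 2 / (2 * σ ^ 2))
      = ((x0 - x1) * (2 * t - x0 - x1) - 2 * σ ^ 2 * ε) / (2 * σ ^ 2) := by
    field_simp
    ring
  rw [heq]
  exact div_nonneg (by linarith) (by positivity)

lemma pdf_compare' (x0 x1 σ ε t : ℝ) (hσ : 0 < σ)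
    (h : (x0 - x1) * (2 * t - x0 - x1) ≤ 2 * σ ^ 2 * ε) :
    gaussianPDFReal x0 ⟨σ ^ 2, sq_nonneg σ⟩ t
      ≤ exp ε * gaussianPDFReal x1 ⟨σ ^ 2, sq_nonneg σ⟩ t := by
  obtain ⟨v, hv', hvc⟩ : ∃ v : NNReal, v = ⟨σ ^ 2, sq_nonneg σ⟩ ∧ (v : ℝ) = σ ^ 2 :=
    ⟨_, rfl, rfl⟩
  rw [← hv']
  simp only [gaussianPDFReal, hvc]
  have hc : (0:ℝ) < (√(2 * π * σ ^ 2))⁻¹ := by positivity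
  rw [mul_left_comm, mul_le_mul_iff_of_pos_left hc, ← Real.exp_add, Real.exp_le_exp, ← sub_nonneg]
  have heq : ε + -(t - x1) ^ 2 / (2 * σ ^ 2) - -(t - x0) ^ 2 / (2 * σ ^ 2)
      = (2 * σ ^ 2 * ε - (x0 - x1) * (2 * t - x0 - x1)) / (2 * σ ^ 2) := by
    field_simp
    ring
  rw [heq]
  exact div_nonneg (by linarith) (by positivity)

lemma toReal_split (μ : Measure ℝ) [IsFiniteMeasure μ] (E : Set ℝ) {T : Set ℝ}
    (hT : MeasurableSet T) :
    (μ E).toReal = (μ (E ∩ T)).toReal + (μ (E \ T)).toReal := by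
  rw [← ENNReal.toReal_add (measure_ne_top _ _) (measure_ne_top _ _),
    measure_inter_add_diff E hT]

/-- Exact formula for the hockey-stick divergence between equal-variance Gaussians at
threshold `e^ε`: `H_{e^ε}(N(x0,σ²)‖N(x1,σ²)) = Φ(−εσ/Δ + Δ/(2σ)) − e^ε·Φ(−εσ/Δ − Δ/(2σ))`,
where `Δ = |x0 − x1|` and `Φ` is the standard normal CDF. -/
theorem hockeyStick_gaussian_formula (x0 x1 σ : ℝ) (hne : x0 ≠ x1) (hσ : 0 < σ) :
    ∀ ε : ℝ, 0 ≤ ε →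
      hockeyStick (exp ε) (gaussianReal x0 ⟨σ ^ 2, sq_nonneg σ⟩)
          (gaussianReal x1 ⟨σ ^ 2, sq_nonneg σ⟩)
        = cdf (gaussianReal 0 1) (-(ε * σ) / |x0 - x1| + |x0 - x1| / (2 * σ))
          - exp ε * cdf (gaussianReal 0 1) (-(ε * σ) / |x0 - x1| - |x0 - x1| / (2 * σ)) := by
  intro ε hε
  set v : NNReal := ⟨σ ^ 2, sq_nonneg σ⟩ with hv_def
  set P := gaussianReal x0 v with hP
  set Q := gaussianReal x1 v with hQ
  set α := exp ε with hα_def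
  have hα : 0 ≤ α := (exp_pos ε).le
  set S : Set ℝ := {t | 2 * σ ^ 2 * ε ≤ (x0 - x1) * (2 * t - x0 - x1)} with hS_def
  have hS : MeasurableSet S :=
    measurableSet_le measurable_const (by fun_prop)
  set f : Set ℝ → ℝ := fun E => (P E).toReal - α * (Q E).toReal with hf_def
  have hon : ∀ A : Set ℝ, A ⊆ S → α * (Q A).toReal ≤ (P A).toReal := by
    intro A hA
    exact gauss_real_le x0 x1 σ α hσ hα fun t ht =>
      pdf_compare x0 x1 σ ε t hσ (hA ht)
  have hoff : ∀ A : Set ℝ, A ⊆ Sᶜ → (P A).toReal ≤ α * (Q A).toReal := by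
    intro A hA
    have hpdf : ∀ t ∈ A, α⁻¹ * gaussianPDFReal x0 v t ≤ gaussianPDFReal x1 v t := by
      intro t ht
      have h1 := pdf_compare' x0 x1 σ ε t hσ (le_of_not_ge (hA ht))
      rw [inv_mul_le_iff₀ (exp_pos ε)]
      exact h1
    have h2 := gauss_real_le x1 x0 σ α⁻¹ hσ (by positivity) hpdf
    rw [inv_mul_le_iff₀ (exp_pos ε)] at h2
    exact h2
  have hmax : ∀ E : Set ℝ, MeasurableSet E → f E ≤ f S := by
    intro E hE
    have hPE := toReal_split P E hS
    have hQE := toReal_split Q E hS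
    have hPS := toReal_split P S hE
    have hQS := toReal_split Q S hE
    rw [Set.inter_comm S E] at hPS hQS
    have h1 := hon (S \ E) (Set.diff_subset)
    have h2 := hoff (E \ S) (fun t ht => ht.2)
    have hQE' : α * (Q E).toReal = α * (Q (E ∩ S)).toReal + α * (Q (E \ S)).toReal := by
      rw [hQE]; ring
    have hQS' : α * (Q S).toReal = α * (Q (E ∩ S)).toReal + α * (Q (S \ E)).toReal := by
      rw [hQS]; ring
    simp only [hf_def]
    linarith
  have hbdd : BddAbove (Set.range fun E : {E : Set ℝ // MeasurableSet E} => f E) := by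
    refine ⟨f S, ?_⟩
    rintro y ⟨E, rfl⟩
    exact hmax E E.2
  have hsup : hockeyStick α P Q = f S := by
    refine le_antisymm (ciSup_le fun E => hmax E E.2) ?_
    exact le_ciSup hbdd (⟨S, hS⟩ : {E : Set ℝ // MeasurableSet E})
  rw [hsup]
  rcases hne.lt_or_gt with h01 | h01
  · -- x0 < x1 : S = Iic c
    set d : ℝ := x1 - x0 with hd_def
    have hd : 0 < d := sub_pos.2 h01
    have habs : |x0 - x1| = d := by rw [abs_sub_comm, abs_of_pos hd]
    set c : ℝ := (x0 + x1) / 2 - σ ^ 2 * ε / d with hc_def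
    have hSeq : S = Iic c := by
      ext t
      simp only [hS_def, Set.mem_setOf_eq, Set.mem_Iic, hc_def]
      rw [sub_div' hd.ne', le_div_iff₀ hd]
      constructor <;> intro h <;> (simp only [hd_def] at h ⊢; nlinarith)
    rw [hf_def]
    simp only [hSeq, hP, hQ, hv_def]
    rw [gauss_Iic x0 σ hσ c, gauss_Iic x1 σ hσ c, habs]
    have e1 : (c - x0) / σ = -(ε * σ) / d + d / (2 * σ) := by
      rw [hc_def, hd_def]; field_simp; ring
    have e2 : (c - x1) / σ = -(ε * σ) / d - d / (2 * σ) := by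
      rw [hc_def, hd_def]; field_simp; ring
    rw [e1, e2]
  · -- x1 < x0 : S = Ici c
    set d : ℝ := x0 - x1 with hd_def
    have hd : 0 < d := sub_pos.2 h01
    have habs : |x0 - x1| = d := abs_of_pos hd
    set c : ℝ := σ ^ 2 * ε / d + (x0 + x1) / 2 with hc_def
    have hSeq : S = Ici c := by
      ext t
      simp only [hS_def, Set.mem_setOf_eq, Set.mem_Ici, hc_def]
      rw [div_add' _ _ _ hd.ne', div_le_iff₀ hd]
      constructor <;> intro h <;> (simp only [hd_def] at h ⊢; nlinarith)
    rw [hf_def]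
    simp only [hSeq, hP, hQ, hv_def]
    rw [gauss_Ici x0 σ hσ c, gauss_Ici x1 σ hσ c, habs]
    have e1 : (x0 - c) / σ = -(ε * σ) / d + d / (2 * σ) := by
      rw [hc_def, hd_def]; field_simp; ring
    have e2 : (x1 - c) / σ = -(ε * σ) / d - d / (2 * σ) := by
      rw [hc_def, hd_def]; field_simp; ring
    rw [e1, e2]
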